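/- arXiv:1812.04848 — 4 statements merged into one kernel-verified Lean document; each statement's English description precedes it below -/
import Mathlib

section
/- Let v̲ < v̄, let h : [v̲,v̄] → ℝ be differentiable with h(t) > 0 and h'(t) > 0 for all t ∈ (v̲,v̄], let b : [v̲,v̄] → [0,∞) satisfy b(t) > 0 for all t ∈ (v̲,v̄], and let p(b,v) be a payment function, differentiable in v, with p(β,t) > 0 whenever β > 0 and (∂p/∂v)(β,t) ≤ 0 for all β ≥ 0, t ∈ [v̲,v̄]. Assume the function t ↦ [ (∂p/∂v)(b(t),t)·h(t) − p(b(t),t)·h'(t) ] / h(t)² is integrable on [v̲, v]. Then for every v ∈ (v̲, v̄]: u(v) := −h(v) · ∫_{v̲}^{v} [ (∂p/∂v)(b(t),t)·h(t) − p(b(t),t)·h'(t) ] / h(t)² dt > 0. In particular, the mechanism satisfies individual rationality: every agent who exerts positive effort reaps strictly positive equilibrium utility. -/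
open intervalIntegral

/-- **Individual rationality of the OPT mechanism (Proposition 2).**
With value-scaling function `h` differentiable, positive and strictly increasing on
`(vlo, vhi]`, equilibrium efforts `b t > 0` for `t ∈ (vlo, vhi]`, and payment function
`p` differentiable in the type with `p β t > 0` for `β > 0` and `∂p/∂v ≤ 0`:
for every type `v ∈ (vlo, vhi]` the equilibrium utility
`u(v) = −h(v) ∫_{vlo}^{v} [p'_v(b(t),t) h(t) − p(b(t),t) h'(t)] / h(t)² dt`
is strictly positive.  In particular every agent exerting positive effort reaps
strictly positive utility. -/
theorem stmt_2
    (vlo vhi : ℝ) (hlohi : vlo < vhi)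
    (h : ℝ → ℝ) (hdiff : Differentiable ℝ h)
    (hpos : ∀ t ∈ Set.Ioc vlo vhi, 0 < h t)
    (h'pos : ∀ t ∈ Set.Ioc vlo vhi, 0 < deriv h t)
    (b : ℝ → ℝ) (hbnonneg : ∀ t ∈ Set.Icc vlo vhi, 0 ≤ b t)
    (hbpos : ∀ t ∈ Set.Ioc vlo vhi, 0 < b t)
    (p : ℝ → ℝ → ℝ)
    (hpdiff : ∀ β : ℝ, Differentiable ℝ (p β))
    (hppos : ∀ β : ℝ, ∀ t ∈ Set.Icc vlo vhi, 0 < β → 0 < p β t)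
    (hpv : ∀ β : ℝ, 0 ≤ β → ∀ t ∈ Set.Icc vlo vhi, deriv (p β) t ≤ 0)
    (hint : ∀ v ∈ Set.Ioc vlo vhi,
      IntervalIntegrable
        (fun t => (deriv (p (b t)) t * h t - p (b t) t * deriv h t) / (h t) ^ 2)
        MeasureTheory.volume vlo v) :
    ∀ v ∈ Set.Ioc vlo vhi,
      0 < -(h v) *
        ∫ t in vlo..v,
          (deriv (p (b t)) t * h t - p (b t) t * deriv h t) / (h t) ^ 2 := by
  intro v hv
  have hIoo : ∀ t ∈ Set.Ioo vlo v, t ∈ Set.Ioc vlo vhi := fun t ht =>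
    ⟨ht.1, le_trans ht.2.le hv.2⟩
  have hneg : ∀ t ∈ Set.Ioo vlo v,
      0 < -((deriv (p (b t)) t * h t - p (b t) t * deriv h t) / (h t) ^ 2) := by
    intro t ht
    have htm := hIoo t ht
    have htIcc : t ∈ Set.Icc vlo vhi := ⟨htm.1.le, htm.2⟩
    have hht := hpos t htm
    have hnum : deriv (p (b t)) t * h t - p (b t) t * deriv h t < 0 := by
      have h1 : deriv (p (b t)) t * h t ≤ 0 :=
        mul_nonpos_of_nonpos_of_nonneg (hpv (b t) (hbnonneg t htIcc) t htIcc) hht.le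
      have h2 : 0 < p (b t) t * deriv h t :=
        mul_pos (hppos (b t) t htIcc (hbpos t htm)) (h'pos t htm)
      linarith
    have : (deriv (p (b t)) t * h t - p (b t) t * deriv h t) / (h t) ^ 2 < 0 :=
      div_neg_of_neg_of_pos hnum (by positivity)
    linarith
  have hIpos : 0 < ∫ t in vlo..v,
      -((deriv (p (b t)) t * h t - p (b t) t * deriv h t) / (h t) ^ 2) :=
    intervalIntegral.intervalIntegral_pos_of_pos_on
      ((hint v hv).neg) hneg hv.1
  rw [intervalIntegral.integral_neg] at hIpos
  have := hpos v hv
  nlinarith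
end

section
/- Consider a two-player asymmetric all-pay contest with incomplete information: types lie in [v̲, v̄] with 0 ≤ v̲ < v̄, the c.d.f.s F₁, F₂ are differentiable with continuous positive densities F₁', F₂' on [v̲,v̄], the prize is fixed and a winner of type v values it at v, and the payment function p : [0,∞) → [0,∞) is continuous, strictly increasing, surjective onto [0,∞) with p(0) = 0. Let k : [v̲,v̄] → [v̲,v̄] be a strictly increasing differentiable bijection with k(v̄) = v̄, k(v̲) = v̲, satisfying the ODE k'(v) = k(v)·F₁'(v) / ( v·F₂'(k(v)) ) on (v̲,v̄]. Define b₁(v) = p^{-1}( ∫_{v̲}^{v} k(t)·F₁'(t) dt ) and b₂(v) = b₁(k^{-1}(v)). Then (b₁, b₂) is a Bayesian Nash equilibrium in the sense that no mimicking deviation is profitable: for all v₁, w ∈ [v̲,v̄], v₁·F₂(k(w)) − p(b₁(w)) ≤ v₁·F₂(k(v₁)) − p(b₁(v₁)), and for all v₂, w ∈ [v̲,v̄], v₂·F₁(k^{-1}(w)) − p(b₂(w)) ≤ v₂·F₁(k^{-1}(v₂)) − p(b₂(v₂)). -/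
open intervalIntegral

/-- If `f` is continuous on `[a,b]`, differentiable inside, with derivative nonneg left of `c`
and nonpos right of `c`, then `f` attains its max over `[a,b]` at `c`. -/
lemma aux_max_at {a b c : ℝ} (hc : c ∈ Set.Icc a b)
    {f : ℝ → ℝ} (hf : ContinuousOn f (Set.Icc a b))
    (hdiff : ∀ x ∈ Set.Ioo a b, DifferentiableAt ℝ f x)
    (hpos : ∀ x ∈ Set.Ioo a c, 0 ≤ deriv f x)
    (hneg : ∀ x ∈ Set.Ioo c b, deriv f x ≤ 0) :
    ∀ w ∈ Set.Icc a b, f w ≤ f c := by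
  have hmono : MonotoneOn f (Set.Icc a c) := by
    apply monotoneOn_of_deriv_nonneg (convex_Icc a c)
      (hf.mono (Set.Icc_subset_Icc le_rfl hc.2))
    · rw [interior_Icc]
      exact fun x hx =>
        (hdiff x ⟨hx.1, lt_of_lt_of_le hx.2 hc.2⟩).differentiableWithinAt
    · rw [interior_Icc]; exact hpos
  have hanti : AntitoneOn f (Set.Icc c b) := by
    apply antitoneOn_of_deriv_nonpos (convex_Icc c b)
      (hf.mono (Set.Icc_subset_Icc hc.1 le_rfl))
    · rw [interior_Icc]
      exact fun x hx =>
        (hdiff x ⟨lt_of_le_of_lt hc.1 hx.1, hx.2⟩).differentiableWithinAt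
    · rw [interior_Icc]; exact hneg
  intro w hw
  rcases le_total w c with h | h
  · exact hmono ⟨hw.1, h⟩ ⟨hc.1, le_rfl⟩ h
  · exact hanti ⟨le_rfl, hc.2⟩ ⟨h, hw.2⟩ h

/-- **Equilibrium strategy in the two-player asymmetric fixed-prize all-pay contest
(Proposition 2 / FIX).**  Types lie in `[vlo, vhi]` with `0 ≤ vlo < vhi`, c.d.f.s
`F₁, F₂` differentiable with continuous positive densities, a fixed prize valued at
`v` by a winner of type `v`, and a continuous, strictly increasing payment function
`p : [0,∞) → [0,∞)`, surjective onto `[0,∞)` with `p 0 = 0` and inverse `pinv`.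
If `k` is a strictly increasing differentiable bijection of `[vlo, vhi]` with
`k vhi = vhi`, `k vlo = vlo`, satisfying the ODE
`k'(v) = k(v) F₁'(v) / (v F₂'(k v))` on `(vlo, vhi]`, then the strategies
`b₁(v) = pinv (∫_{vlo}^{v} k(t) F₁'(t) dt)` and `b₂(v) = b₁(k⁻¹(v))` form a
Bayesian Nash equilibrium: no mimicking deviation is profitable for either player. -/
theorem stmt_3
    (vlo vhi : ℝ) (hlo : 0 ≤ vlo) (hlohi : vlo < vhi)
    (F1 F2 : ℝ → ℝ)
    (hF1 : Differentiable ℝ F1) (hF2 : Differentiable ℝ F2)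
    (hF1' : ContinuousOn (deriv F1) (Set.Icc vlo vhi))
    (hF2' : ContinuousOn (deriv F2) (Set.Icc vlo vhi))
    (hF1pos : ∀ v ∈ Set.Icc vlo vhi, 0 < deriv F1 v)
    (hF2pos : ∀ v ∈ Set.Icc vlo vhi, 0 < deriv F2 v)
    (p : ℝ → ℝ)
    (hpc : ContinuousOn p (Set.Ici 0))
    (hpm : StrictMonoOn p (Set.Ici (0 : ℝ)))
    (hpsurj : ∀ y : ℝ, 0 ≤ y → ∃ x : ℝ, 0 ≤ x ∧ p x = y)
    (hpnonneg : ∀ x : ℝ, 0 ≤ x → 0 ≤ p x)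
    (hp0 : p 0 = 0)
    (pinv : ℝ → ℝ)
    (hpinv_nonneg : ∀ y : ℝ, 0 ≤ y → 0 ≤ pinv y)
    (hpinv_left : ∀ x : ℝ, 0 ≤ x → pinv (p x) = x)
    (hpinv_right : ∀ y : ℝ, 0 ≤ y → p (pinv y) = y)
    (k : ℝ → ℝ)
    (hkmono : StrictMonoOn k (Set.Icc vlo vhi))
    (hkdiff : ∀ v ∈ Set.Icc vlo vhi, DifferentiableAt ℝ k v)
    (hkbij : Set.BijOn k (Set.Icc vlo vhi) (Set.Icc vlo vhi))
    (hkhi : k vhi = vhi) (hklo : k vlo = vlo)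
    (hODE : ∀ v ∈ Set.Ioc vlo vhi,
      deriv k v = k v * deriv F1 v / (v * deriv F2 (k v)))
    (kinv : ℝ → ℝ)
    (hkinv_left : ∀ v ∈ Set.Icc vlo vhi, kinv (k v) = v)
    (hkinv_right : ∀ v ∈ Set.Icc vlo vhi, k (kinv v) = v)
    (b1 b2 : ℝ → ℝ)
    (hb1 : ∀ v, b1 v = pinv (∫ t in vlo..v, k t * deriv F1 t))
    (hb2 : ∀ v, b2 v = b1 (kinv v)) :
    (∀ v1 ∈ Set.Icc vlo vhi, ∀ w ∈ Set.Icc vlo vhi,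
        v1 * F2 (k w) - p (b1 w) ≤ v1 * F2 (k v1) - p (b1 v1)) ∧
    (∀ v2 ∈ Set.Icc vlo vhi, ∀ w ∈ Set.Icc vlo vhi,
        v2 * F1 (kinv w) - p (b2 w) ≤ v2 * F1 (kinv v2) - p (b2 v2)) := by
  set g : ℝ → ℝ := fun t => k t * deriv F1 t with hg
  set G : ℝ → ℝ := fun w => ∫ t in vlo..w, g t with hG
  have hkc : ContinuousOn k (Set.Icc vlo vhi) :=
    fun x hx => ((hkdiff x hx).continuousAt).continuousWithinAt
  have hgc : ContinuousOn g (Set.Icc vlo vhi) := hkc.mul hF1'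
  have hknn : ∀ t ∈ Set.Icc vlo vhi, 0 ≤ k t := fun t ht =>
    le_trans hlo (hkbij.mapsTo ht).1
  -- nonnegativity of G
  have hGnn : ∀ w ∈ Set.Icc vlo vhi, 0 ≤ G w := by
    intro w hw
    apply intervalIntegral.integral_nonneg hw.1
    intro t ht
    exact mul_nonneg (hknn t ⟨ht.1, le_trans ht.2 hw.2⟩)
      (hF1pos t ⟨ht.1, le_trans ht.2 hw.2⟩).le
  have hpb1 : ∀ w ∈ Set.Icc vlo vhi, p (b1 w) = G w := by
    intro w hw; rw [hb1]; exact hpinv_right _ (hGnn w hw)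
  -- continuity of G on Icc
  have hGcont : ContinuousOn G (Set.Icc vlo vhi) := by
    have h1 : Set.uIcc vlo vhi = Set.Icc vlo vhi := Set.uIcc_of_le hlohi.le
    have := intervalIntegral.continuousOn_primitive_interval
      (f := g) (a := vlo) (b := vhi) (μ := MeasureTheory.volume) ?_
    · rwa [h1] at this
    · rw [h1]
      exact hgc.integrableOn_Icc
  -- derivative of G inside
  have hGderiv : ∀ x ∈ Set.Ioo vlo vhi, HasDerivAt G (g x) x := by
    intro x hx
    have hsub : Set.uIcc vlo x ⊆ Set.Icc vlo vhi := by
      rw [Set.uIcc_of_le hx.1.le]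
      exact Set.Icc_subset_Icc le_rfl hx.2.le
    have hint : IntervalIntegrable g MeasureTheory.volume vlo x :=
      (hgc.mono hsub).intervalIntegrable
    have hca : ContinuousAt g x :=
      (hgc.continuousAt (Icc_mem_nhds hx.1 hx.2))
    exact intervalIntegral.integral_hasDerivAt_right hint
      ((hgc.mono Set.Ioo_subset_Icc_self).stronglyMeasurableAtFilter
        isOpen_Ioo x hx) hca
  constructor
  · -- player 1
    intro v1 hv1 w hw
    rw [hpb1 w hw, hpb1 v1 hv1]
    set Φ : ℝ → ℝ := fun x => v1 * F2 (k x) - G x with hΦ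
    have hΦderiv : ∀ x ∈ Set.Ioo vlo vhi,
        HasDerivAt Φ (g x * (v1 - x) / x) x := by
      intro x hx
      have hx0 : 0 < x := lt_of_le_of_lt hlo hx.1
      have hkx : k x ∈ Set.Icc vlo vhi := hkbij.mapsTo ⟨hx.1.le, hx.2.le⟩
      have hF2k : HasDerivAt (fun y => F2 (k y))
          (deriv F2 (k x) * deriv k x) x :=
        (hF2 (k x)).hasDerivAt.comp x
          ((hkdiff x ⟨hx.1.le, hx.2.le⟩).hasDerivAt)
      have h1 : HasDerivAt Φ
          (v1 * (deriv F2 (k x) * deriv k x) - g x) x :=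
        (hF2k.const_mul v1).sub (hGderiv x hx)
      have heq : v1 * (deriv F2 (k x) * deriv k x) - g x
          = g x * (v1 - x) / x := by
        rw [hODE x ⟨hx.1, hx.2.le⟩, hg]
        have hF2x : deriv F2 (k x) ≠ 0 := (hF2pos _ hkx).ne'
        field_simp
      rwa [heq] at h1
    have hΦcont : ContinuousOn Φ (Set.Icc vlo vhi) :=
      (continuousOn_const.mul (hF2.continuous.comp_continuousOn hkc)).sub hGcont
    refine aux_max_at hv1 hΦcont
      (fun x hx => (hΦderiv x hx).differentiableAt) ?_ ?_ w hw
    · intro x hx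
      have hx' : x ∈ Set.Ioo vlo vhi := ⟨hx.1, lt_of_lt_of_le hx.2 hv1.2⟩
      rw [(hΦderiv x hx').deriv]
      have hx0 : 0 < x := lt_of_le_of_lt hlo hx.1
      have hxm : x ∈ Set.Icc vlo vhi := ⟨hx'.1.le, hx'.2.le⟩
      have : 0 ≤ g x := mul_nonneg (hknn x hxm) (hF1pos x hxm).le
      exact div_nonneg (mul_nonneg this (by linarith [hx.2])) hx0.le
    · intro x hx
      have hx' : x ∈ Set.Ioo vlo vhi := ⟨lt_of_le_of_lt hv1.1 hx.1, hx.2⟩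
      rw [(hΦderiv x hx').deriv]
      have hx0 : 0 < x := lt_of_le_of_lt hlo hx'.1
      have hxm : x ∈ Set.Icc vlo vhi := ⟨hx'.1.le, hx'.2.le⟩
      have hgnn : 0 ≤ g x := mul_nonneg (hknn x hxm) (hF1pos x hxm).le
      have : v1 - x ≤ 0 := by linarith [hx.1]
      exact div_nonpos_of_nonpos_of_nonneg
        (mul_nonpos_of_nonneg_of_nonpos hgnn this) hx0.le
  · -- player 2
    intro v2 hv2 w hw
    obtain ⟨s, hs, hks⟩ := hkbij.surjOn hw
    have hsw : kinv w = s := by rw [← hks, hkinv_left s hs]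
    have hc : kinv v2 ∈ Set.Icc vlo vhi := by
      obtain ⟨c, hcm, hkc2⟩ := hkbij.surjOn hv2
      rw [← hkc2, hkinv_left c hcm]; exact hcm
    have hkc2 : k (kinv v2) = v2 := hkinv_right v2 hv2
    rw [hb2, hb2, hsw]
    rw [hpb1 s hs, hpb1 (kinv v2) hc]
    set Φ : ℝ → ℝ := fun x => v2 * F1 x - G x with hΦ
    have hΦderiv : ∀ x ∈ Set.Ioo vlo vhi,
        HasDerivAt Φ (deriv F1 x * (v2 - k x)) x := by
      intro x hx
      have h1 : HasDerivAt Φ (v2 * deriv F1 x - g x) x :=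
        ((hF1 x).hasDerivAt.const_mul v2).sub (hGderiv x hx)
      have : v2 * deriv F1 x - g x = deriv F1 x * (v2 - k x) := by
        rw [hg]; ring
      rwa [this] at h1
    have hΦcont : ContinuousOn Φ (Set.Icc vlo vhi) :=
      (continuousOn_const.mul hF1.continuous.continuousOn).sub hGcont
    refine aux_max_at hc hΦcont
      (fun x hx => (hΦderiv x hx).differentiableAt) ?_ ?_ s hs
    · intro x hx
      have hx' : x ∈ Set.Ioo vlo vhi := ⟨hx.1, lt_of_lt_of_le hx.2 hc.2⟩
      rw [(hΦderiv x hx').deriv]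
      have hxm : x ∈ Set.Icc vlo vhi := ⟨hx'.1.le, hx'.2.le⟩
      have hkx : k x < v2 := by
        rw [← hkc2]; exact hkmono hxm hc hx.2
      exact mul_nonneg (hF1pos x hxm).le (by linarith)
    · intro x hx
      have hx' : x ∈ Set.Ioo vlo vhi := ⟨lt_of_le_of_lt hc.1 hx.1, hx.2⟩
      rw [(hΦderiv x hx').deriv]
      have hxm : x ∈ Set.Icc vlo vhi := ⟨hx'.1.le, hx'.2.le⟩
      have hkx : v2 < k x := by
        rw [← hkc2]; exact hkmono hc hxm hx.1
      exact mul_nonpos_of_nonneg_of_nonpos (hF1pos x hxm).le (by linarith)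
end

section
/- For every λ > 0, every v ∈ [0,1], and every b ∈ [0, 1/(2λ)]: v·(2λb)^{3/2}/(3λ²) − b² ≤ v⁴/(12λ²), with equality if and only if b = v²/(2λ). Equivalently, in the OPT mechanism agent 1's strategy b₁(v) = v²/(2λ) is a best response against the prize function Z₁ and agent 2's strategy: the expected utility v·Z₁(b)·F₂(√(2λb)) − b² = v(2λb)^{3/2}/(3λ²) − b² is uniquely maximized at b = v²/(2λ). -/
/-- **Best response of agent 1 in OPT.**
For every `λ > 0`, `v ∈ [0,1]` and `b ∈ [0, 1/(2λ)]`: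
`v (2λb)^{3/2} / (3λ²) − b² ≤ v⁴ / (12λ²)`, with equality iff `b = v²/(2λ)`;
i.e. agent 1's strategy `b₁(v) = v²/(2λ)` is a best response against the optimal
prize function `Z₁` and agent 2's equilibrium strategy. -/
theorem stmt_10 :
    ∀ lam : ℝ, 0 < lam →
    ∀ v ∈ Set.Icc (0 : ℝ) 1, ∀ b ∈ Set.Icc (0 : ℝ) (1 / (2 * lam)),
      (v * (2 * lam * b) ^ ((3 : ℝ) / 2) / (3 * lam ^ 2) - b ^ 2
          ≤ v ^ 4 / (12 * lam ^ 2) ∧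
        (v * (2 * lam * b) ^ ((3 : ℝ) / 2) / (3 * lam ^ 2) - b ^ 2
            = v ^ 4 / (12 * lam ^ 2) ↔ b = v ^ 2 / (2 * lam))) := by
  intro lam hlam v hv b hb
  obtain ⟨hv0, hv1⟩ := hv
  obtain ⟨hb0, hb1⟩ := hb
  set t := Real.sqrt (2 * lam * b) with ht
  have hnn : (0:ℝ) ≤ 2 * lam * b := by positivity
  have ht0 : 0 ≤ t := Real.sqrt_nonneg _
  have ht2 : t ^ 2 = 2 * lam * b := Real.sq_sqrt hnn
  have hbt : b = t ^ 2 / (2 * lam) := by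
    field_simp [ht2]
    rw [ht2]; ring
  have h3 : (2 * lam * b) ^ ((3 : ℝ) / 2) = t ^ 3 := by
    rw [ht, Real.sqrt_eq_rpow, ← Real.rpow_natCast ((2 * lam * b) ^ ((1:ℝ)/2)) 3,
      ← Real.rpow_mul hnn]
    norm_num
  have hlam' : lam ≠ 0 := ne_of_gt hlam
  have key : v ^ 4 / (12 * lam ^ 2) -
      (v * (2 * lam * b) ^ ((3 : ℝ) / 2) / (3 * lam ^ 2) - b ^ 2)
      = (v - t) ^ 2 * (v ^ 2 + 2 * v * t + 3 * t ^ 2) / (12 * lam ^ 2) := by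
    rw [h3, hbt]
    field_simp
    ring
  have hfac : 0 ≤ (v - t) ^ 2 * (v ^ 2 + 2 * v * t + 3 * t ^ 2) := by
    have : 0 ≤ v ^ 2 + 2 * v * t + 3 * t ^ 2 := by positivity
    exact mul_nonneg (sq_nonneg _) this
  constructor
  · nlinarith [key, div_nonneg hfac (by positivity : (0:ℝ) ≤ 12 * lam ^ 2)]
  · constructor
    · intro heq
      have h0 : (v - t) ^ 2 * (v ^ 2 + 2 * v * t + 3 * t ^ 2) / (12 * lam ^ 2) = 0 := by
        rw [← key, heq]; ring
      have h0' : (v - t) ^ 2 * (v ^ 2 + 2 * v * t + 3 * t ^ 2) = 0 := by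
        field_simp at h0
        linear_combination h0
      have htv : t = v := by
        rcases mul_eq_zero.mp h0' with h | h
        · have := pow_eq_zero_iff (n := 2) (by norm_num) |>.mp h
          linarith
        · nlinarith [sq_nonneg v, sq_nonneg t, mul_nonneg hv0 ht0]
      rw [hbt, htv]
    · intro heq
      have htv : t = v := by
        rw [ht, heq]
        have : 2 * lam * (v ^ 2 / (2 * lam)) = v ^ 2 := by field_simp
        rw [this, Real.sqrt_sq hv0]
      rw [h3, htv, heq]
      field_simp
      ring
end

section
/- For every λ > 0 and every natural number n ≥ 1: n·∫₀¹ (v²/(2λ)) dv − λ·∫₀¹ (v^{4−n}/(3λ²))·n·v^{n−1} dv = n/(12λ). That is, in the OPT-n mechanism the expected total effort is n/(6λ), the expected prize cost is n/(12λ), and the principal's profit π^{opt-n} = n/(12λ) grows linearly in the number of agents n. -/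
open intervalIntegral

lemma aux_int (lam : ℝ) (n : ℕ) :
    (∫ v in (0:ℝ)..1,
        (v ^ ((4 : ℝ) - (n : ℝ)) / (3 * lam ^ 2)) * ((n : ℝ) * v ^ ((n : ℝ) - 1)))
      = (n : ℝ) / (12 * lam ^ 2) := by
  have h : (∫ v in (0:ℝ)..1,
        (v ^ ((4 : ℝ) - (n : ℝ)) / (3 * lam ^ 2)) * ((n : ℝ) * v ^ ((n : ℝ) - 1)))
      = ∫ v in (0:ℝ)..1, ((n : ℝ) / (3 * lam ^ 2)) * v ^ (3 : ℝ) := by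
    apply intervalIntegral.integral_congr_ae
    filter_upwards with v hmem
    rw [Set.uIoc_of_le (by norm_num : (0:ℝ) ≤ 1)] at hmem
    have hv0 : 0 < v := hmem.1
    rw [show v ^ (3:ℝ) = v ^ ((4:ℝ) - n) * v ^ ((n:ℝ) - 1) from by
      rw [← Real.rpow_add hv0]; norm_num]
    ring
  rw [h, intervalIntegral.integral_const_mul, integral_rpow (Or.inl (by norm_num))]
  norm_num
  ring

/-- **Linear profit growth of OPT-n.**
For every `λ > 0` and `n ≥ 1`: in the OPT-n mechanism the expected total effort
`n ∫₀¹ v²/(2λ) dv` equals `n/(6λ)`, the expected prize cost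
`λ ∫₀¹ (v^{4−n}/(3λ²)) n v^{n−1} dv` equals `n/(12λ)`, and the principal's profit
`π^{opt-n}` equals `n/(12λ)`, growing linearly in the number of agents `n`. -/
theorem stmt_17 :
    ∀ lam : ℝ, 0 < lam → ∀ n : ℕ, 1 ≤ n →
      ((n : ℝ) * ∫ v in (0:ℝ)..1, v ^ 2 / (2 * lam)) = (n : ℝ) / (6 * lam) ∧
      (lam * ∫ v in (0:ℝ)..1,
          (v ^ ((4 : ℝ) - (n : ℝ)) / (3 * lam ^ 2)) * ((n : ℝ) * v ^ ((n : ℝ) - 1)))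
        = (n : ℝ) / (12 * lam) ∧
      (((n : ℝ) * ∫ v in (0:ℝ)..1, v ^ 2 / (2 * lam)) -
          lam * ∫ v in (0:ℝ)..1,
            (v ^ ((4 : ℝ) - (n : ℝ)) / (3 * lam ^ 2)) * ((n : ℝ) * v ^ ((n : ℝ) - 1)))
        = (n : ℝ) / (12 * lam) := by
  intro lam hl n hn
  have h1 : (∫ v in (0:ℝ)..1, v ^ 2 / (2 * lam)) = 1 / (6 * lam) := by
    rw [intervalIntegral.integral_div, integral_pow]
    norm_num; ring
  have h2 := aux_int lam n
  have hl' : lam ≠ 0 := ne_of_gt hl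
  refine ⟨?_, ?_, ?_⟩
  · rw [h1]; ring
  · rw [h2]; field_simp
  · rw [h1, h2]; field_simp; ring
end
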